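/- Let F be a nonmeager filter on ℕ. Then F is nonmeager-bounding: for every family Y ⊆ ℕ^ℕ with |Y| < b(F), the set {g increasing : ∀ f ∈ Y, f ≤_F g} is nonmeager. -/

import Mathlib

open Set Filter Cardinal

/-- A semifilter: a nonempty family of infinite subsets of ℕ closed under
almost-supersets. -/
def SemifilterOn (F : Set (Set ℕ)) : Prop :=
  F.Nonempty ∧ (∀ A ∈ F, A.Infinite) ∧
    ∀ A ∈ F, ∀ B : Set ℕ, (A \ B).Finite → B ∈ F

/-- `f ≤_F g` : the set where `f ≤ g` belongs to `F`. -/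
def LeSF (F : Set (Set ℕ)) (f g : ℕ → ℕ) : Prop := {n | f n ≤ g n} ∈ F

/-- `Y` is bounded with respect to `≤_F`. -/
def BoundedSF (F : Set (Set ℕ)) (Y : Set (ℕ → ℕ)) : Prop :=
  ∃ g : ℕ → ℕ, ∀ f ∈ Y, LeSF F f g

/-- `b(F)` : the minimal cardinality of a `≤_F`-unbounded family in `ℕ^ℕ`. -/
noncomputable def bSF (F : Set (Set ℕ)) : Cardinal :=
  sInf {c : Cardinal | ∃ Y : Set (ℕ → ℕ), #Y = c ∧ ¬ BoundedSF F Y}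

/-- `f ≤* g` : eventual domination. -/
def EvLe (f g : ℕ → ℕ) : Prop := ∀ᶠ n in Filter.atTop, f n ≤ g n

/-- A filter: a semifilter closed under finite intersections. -/
def FilterOn (F : Set (Set ℕ)) : Prop :=
  SemifilterOn F ∧ ∀ A ∈ F, ∀ B ∈ F, A ∩ B ∈ F

/-- `F` is nonmeager, viewed as a subset of `2^ℕ`. -/
def NonmeagerSF (F : Set (Set ℕ)) : Prop :=
  ¬ IsMeagre {x : ℕ → Bool | {n | x n = true} ∈ F}

abbrev MSp := {g : ℕ → ℕ // StrictMono g}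

lemma avoid_ext {T : Set MSp} (hc : IsClosed T) (hnd : IsNowhereDense T) (z : MSp) (n : ℕ) :
    ∃ (w : MSp) (N : ℕ), n ≤ N ∧ (∀ i < n, w.1 i = z.1 i) ∧
      ∀ y : MSp, (∀ i < N, y.1 i = w.1 i) → y ∉ T := by
  obtain ⟨hop, hden⟩ := isClosed_isNowhereDense_iff_compl.1 ⟨hc, hnd⟩
  have hcylopen : IsOpen {y : MSp | ∀ i < n, y.1 i = z.1 i} := by
    have : {y : MSp | ∀ i < n, y.1 i = z.1 i}
        = Subtype.val ⁻¹' (PiNat.cylinder z.1 n) := rfl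
    rw [this]
    exact (PiNat.isOpen_cylinder (fun _ => ℕ) z.1 n).preimage continuous_subtype_val
  obtain ⟨w, hwT, hwcyl⟩ := hden.exists_mem_open hcylopen ⟨z, fun i _ => rfl⟩
  obtain ⟨U, hU, hUT⟩ := isOpen_induced_iff.1 hop
  have hwU : w.1 ∈ U := by
    have : w ∈ Subtype.val ⁻¹' U := by rw [hUT]; exact hwT
    exact this
  obtain ⟨v, ⟨c, N', rfl⟩, hwv, hvU⟩ :=
    (PiNat.isTopologicalBasis_cylinders (fun _ => ℕ)).exists_subset_of_mem_open hwU hU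
  refine ⟨w, max n N', le_max_left _ _, fun i hi => hwcyl i hi, ?_⟩
  intro y hy hyT
  have hyv : y.1 ∈ PiNat.cylinder c N' := by
    intro i hi
    rw [hy i (lt_of_lt_of_le hi (le_max_right n N'))]
    exact hwv i hi
  have : y ∈ Subtype.val ⁻¹' U := hvU hyv
  rw [hUT] at this
  exact this hyT

lemma listIter {S G : Type*} (ext : S → S → Prop) (achieved : G → S → Prop)
    (hrefl : ∀ s, ext s s) (htrans : ∀ a b c, ext a b → ext b c → ext a c)
    (hpers : ∀ g a b, achieved g a → ext a b → achieved g b) (s₀ : S)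
    (hstep : ∀ g s, ext s₀ s → ∃ s', ext s s' ∧ achieved g s') :
    ∀ l : List G, ∃ s', ext s₀ s' ∧ ∀ g ∈ l, achieved g s' := by
  intro l
  induction l with
  | nil => exact ⟨s₀, hrefl s₀, by simp⟩
  | cons g t ih =>
    obtain ⟨s₁, hs₁, hach⟩ := ih
    obtain ⟨s₂, hs₂, hg⟩ := hstep g s₁ hs₁
    refine ⟨s₂, htrans _ _ _ hs₁ hs₂, ?_⟩
    intro g' hg'
    rcases List.mem_cons.1 hg' with h | h
    · exact h ▸ hg
    · exact hpers _ _ _ (hach g' h) hs₂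

lemma stage (T : ℕ → Set MSp) (hTc : ∀ m, IsClosed (T m)) (hTn : ∀ m, IsNowhereDense (T m))
    (g₀ : ℕ → ℕ) (k : ℕ) (x : MSp) (n : ℕ) :
    ∃ (x' : MSp) (n' : ℕ), n < n' ∧ (∀ i < n, x'.1 i = x.1 i) ∧
      x'.1 n = g₀ n + x.1 n ∧
      ∀ m ≤ k, ∀ y : MSp, (∀ i, n ≤ i → i < n' → y.1 i = x'.1 i) → y ∉ T m := by
  classical
  set V : ℕ := g₀ n + x.1 n with hV
  have hxV : x.1 n ≤ V := by omega
  -- initial extension with large value V at position n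
  have hx₁mono : StrictMono (fun i => if i < n then x.1 i else V + (i - n)) := by
    apply strictMono_nat_of_lt_succ
    intro i
    by_cases h1 : i + 1 < n
    · have h2 : i < n := by omega
      simp only [if_pos h1, if_pos h2]
      exact x.2 (Nat.lt_succ_self i)
    · by_cases h2 : i < n
      · simp only [if_pos h2, if_neg h1]
        have : x.1 i < x.1 n := x.2 h2
        omega
      · have h3 : ¬ i + 1 < n := by omega
        simp only [if_neg h2, if_neg h3]
        omega
  set x₁ : MSp := ⟨_, hx₁mono⟩ with hx₁
  have hx₁n : x₁.1 n = V := by simp [hx₁]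
  -- the finite type of prefixes
  let Q := {q : Fin n → ℕ // StrictMono q ∧ ∀ i, q i < V}
  haveI : Finite Q := by
    apply Finite.of_injective (fun q : Q => (fun i => (⟨q.1 i, q.2.2 i⟩ : Fin V)))
    intro q₁ q₂ h
    apply Subtype.ext
    funext i
    exact congrArg Fin.val (congrFun h i)
  let G := Q × Fin (k + 1)
  haveI : Finite G := inferInstance
  haveI : Fintype G := Fintype.ofFinite G
  -- the extension relation and goals
  let ext : (MSp × ℕ) → (MSp × ℕ) → Prop := fun a b => a.2 ≤ b.2 ∧ ∀ i < a.2, b.1.1 i = a.1.1 i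
  let achieved : G → (MSp × ℕ) → Prop := fun g s =>
    ∀ y : MSp, (∀ i : Fin n, y.1 i = g.1.1 i) → (∀ i, n ≤ i → i < s.2 → y.1 i = s.1.1 i) →
      y ∉ T (g.2 : ℕ)
  have hstep : ∀ g s, ext (x₁, n + 1) s → ∃ s', ext s s' ∧ achieved g s' := by
    rintro ⟨q, m⟩ ⟨xb, nb⟩ ⟨hnb, hagr⟩
    simp only at hnb hagr
    have hxbn : xb.1 n = V := by rw [hagr n (Nat.lt_succ_self n)]; exact hx₁n
    -- combined point z : prefix q then xb
    have hzmono : StrictMono (fun i => if h : i < n then q.1 ⟨i, h⟩ else xb.1 i) := by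
      apply strictMono_nat_of_lt_succ
      intro i
      by_cases h1 : i + 1 < n
      · have h2 : i < n := by omega
        simp only [dif_pos h1, dif_pos h2]
        exact q.2.1 (show (⟨i, h2⟩ : Fin n) < ⟨i + 1, h1⟩ from Nat.lt_succ_self i)
      · by_cases h2 : i < n
        · simp only [dif_pos h2, dif_neg h1]
          calc q.1 ⟨i, h2⟩ < V := q.2.2 _
            _ = xb.1 n := hxbn.symm
            _ ≤ xb.1 (i + 1) := xb.2.monotone (by omega)
        · have h3 : ¬ i + 1 < n := by omega
          simp only [dif_neg h2, dif_neg h3]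
          exact xb.2 (Nat.lt_succ_self i)
    obtain ⟨w, N, hnN, hwz, hwavoid⟩ := avoid_ext (hTc m) (hTn m) ⟨_, hzmono⟩ nb
    have hnnb : n < nb := by omega
    -- new state: patch xb's prefix onto w
    have hx₂mono : StrictMono (fun i => if i < n then xb.1 i else w.1 i) := by
      apply strictMono_nat_of_lt_succ
      intro i
      by_cases h1 : i + 1 < n
      · have h2 : i < n := by omega
        simp only [if_pos h1, if_pos h2]
        exact xb.2 (Nat.lt_succ_self i)
      · by_cases h2 : i < n
        · simp only [if_pos h2, if_neg h1]
          have hw1 : w.1 (i + 1) = xb.1 (i + 1) := by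
            rw [hwz (i + 1) (by omega)]
            simp only [dif_neg h1]
          rw [hw1]
          exact xb.2 (Nat.lt_succ_self i)
        · have h3 : ¬ i + 1 < n := by omega
          simp only [if_neg h2, if_neg h3]
          exact w.2 (Nat.lt_succ_self i)
    refine ⟨(⟨_, hx₂mono⟩, N), ⟨hnN, ?_⟩, ?_⟩
    · intro i hi
      by_cases h2 : i < n
      · simp only [if_pos h2]
      · simp only [if_neg h2]
        rw [hwz i hi]
        simp only [dif_neg h2]
    · intro y hq hagr2 hyT
      refine hwavoid y ?_ hyT
      intro i hiN
      by_cases h2 : i < n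
      · rw [hq ⟨i, h2⟩, hwz i (by omega)]
        simp only [dif_pos h2]
      · have := hagr2 i (by omega) hiN
        simpa only [if_neg h2] using this
  have hL := listIter ext achieved (fun s => ⟨le_rfl, fun _ _ => rfl⟩)
    (fun a b c hab hbc => ⟨hab.1.trans hbc.1, fun i hi => by
      rw [hbc.2 i (lt_of_lt_of_le hi hab.1), hab.2 i hi]⟩)
    (fun g a b hach hext => by
      intro y hq hagr2
      refine hach y hq ?_
      intro i hni hia
      rw [hagr2 i hni (lt_of_lt_of_le hia hext.1), hext.2 i hia])
    (x₁, n + 1) hstep (Finset.univ : Finset G).toList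
  obtain ⟨⟨x', n'⟩, ⟨hn', hagr0⟩, hall⟩ := hL
  simp only at hn' hagr0
  refine ⟨x', n', by omega, ?_, ?_, ?_⟩
  · intro i hi
    rw [hagr0 i (by omega)]
    simp [hx₁, if_pos hi]
  · rw [hagr0 n (Nat.lt_succ_self n)]; exact hx₁n
  · intro m hm y hy
    have hyn : y.1 n = V := by
      rw [hy n le_rfl (by omega), hagr0 n (Nat.lt_succ_self n)]; exact hx₁n
    have hqmono : StrictMono (fun i : Fin n => y.1 i) := fun i j hij => y.2 hij
    have hqlt : ∀ i : Fin n, y.1 i < V := by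
      intro i
      rw [← hyn]
      exact y.2 i.2
    exact hall (⟨⟨_, hqmono, hqlt⟩, ⟨m, Nat.lt_succ_of_le hm⟩⟩)
      (Finset.mem_toList.2 (Finset.mem_univ _)) y (fun i => rfl) hy

lemma upward {F : Set (Set ℕ)} (hF : SemifilterOn F) {A B : Set ℕ} (hA : A ∈ F) (hAB : A ⊆ B) :
    B ∈ F :=
  hF.2.2 A hA B (by rw [Set.diff_eq_empty.2 hAB]; exact Set.finite_empty)

lemma coreE (F : Set (Set ℕ)) (hF : FilterOn F) (g₀ : ℕ → ℕ) (hg₀ : StrictMono g₀)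
    (hM : IsMeagre {h : MSp | LeSF F g₀ h.1}) :
    ∃ n : ℕ → ℕ, StrictMono n ∧
      ∀ A ∈ F, {k | A ∩ Set.Ico (n k) (n (k + 1)) = ∅}.Finite := by
  classical
  -- extract a countable family of closed nowhere dense sets covering M₀
  obtain ⟨S, hSnd, hScnt, hScov⟩ := isMeagre_iff_countable_union_isNowhereDense.1 hM
  obtain ⟨f, hf⟩ := (hScnt.insert ∅).exists_eq_range (Set.insert_nonempty _ _)
  set T : ℕ → Set MSp := fun m => closure (f m) with hT
  have hTc : ∀ m, IsClosed (T m) := fun m => isClosed_closure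
  have hTn : ∀ m, IsNowhereDense (T m) := by
    intro m
    have : f m ∈ insert ∅ S := by rw [hf]; exact Set.mem_range_self m
    rcases this with h | h
    · rw [hT]; simp only [h, closure_empty]; exact isNowhereDense_empty
    · exact (hSnd _ h).closure
  have hcov : {h : MSp | LeSF F g₀ h.1} ⊆ ⋃ m, T m := by
    intro h hh
    obtain ⟨s, hsS, hhs⟩ := hScov hh
    have : s ∈ insert ∅ S := Set.mem_insert_of_mem _ hsS
    rw [hf] at this
    obtain ⟨m, rfl⟩ := this
    exact Set.mem_iUnion.2 ⟨m, subset_closure hhs⟩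
  -- build the fusion sequence
  have hstep : ∀ (k : ℕ) (s : MSp × ℕ), ∃ s' : MSp × ℕ,
      s.2 < s'.2 ∧ (∀ i < s.2, s'.1.1 i = s.1.1 i) ∧
      s'.1.1 s.2 = g₀ s.2 + s.1.1 s.2 ∧
      ∀ m ≤ k, ∀ y : MSp, (∀ i, s.2 ≤ i → i < s'.2 → y.1 i = s'.1.1 i) → y ∉ T m := by
    intro k s
    obtain ⟨x', n', h1, h2, h3, h4⟩ := stage T hTc hTn g₀ k s.1 s.2
    exact ⟨(x', n'), h1, h2, h3, h4⟩
  set seq : ℕ → MSp × ℕ := fun k =>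
    Nat.rec (⟨⟨id, strictMono_id⟩, 0⟩ : MSp × ℕ) (fun k s => (hstep k s).choose) k with hseq
  have hseqsucc : ∀ k, seq (k + 1) = (hstep k (seq k)).choose := fun k => rfl
  set nn : ℕ → ℕ := fun k => (seq k).2 with hnn
  set xx : ℕ → MSp := fun k => (seq k).1 with hxx
  have hspec : ∀ k, nn k < nn (k + 1) ∧ (∀ i < nn k, (xx (k + 1)).1 i = (xx k).1 i) ∧
      (xx (k + 1)).1 (nn k) = g₀ (nn k) + (xx k).1 (nn k) ∧
      ∀ m ≤ k, ∀ y : MSp, (∀ i, nn k ≤ i → i < nn (k + 1) → y.1 i = (xx (k + 1)).1 i) →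
        y ∉ T m := by
    intro k
    have := (hstep k (seq k)).choose_spec
    rw [← hseqsucc k] at this
    exact this
  have hnmono : StrictMono nn := strictMono_nat_of_lt_succ fun k => (hspec k).1
  have hnge : ∀ k, k ≤ nn k := fun k => hnmono.le_apply
  -- agreement between stages
  have hagree : ∀ j j', j ≤ j' → ∀ i < nn j, (xx j').1 i = (xx j).1 i := by
    intro j j' hjj'
    induction j' , hjj' using Nat.le_induction with
    | base => intro i _; rfl
    | succ j' hjj' ih =>
      intro i hi
      rw [(hspec j').2.1 i (lt_of_lt_of_le hi (hnmono.monotone hjj')), ih i hi]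
  set σ : ℕ → ℕ := fun i => (xx (i + 1)).1 i with hσ
  have hkey : ∀ k i, i < nn k → σ i = (xx k).1 i := by
    intro k i hi
    have hin : i < nn (i + 1) := lt_of_lt_of_le (Nat.lt_succ_self i) (hnge (i + 1))
    rcases le_total k (i + 1) with h | h
    · rw [hσ]; exact hagree k (i + 1) h i hi
    · rw [hσ]
      exact (hagree (i + 1) k h i hin).symm
  have hσmono : StrictMono σ := by
    apply strictMono_nat_of_lt_succ
    intro i
    have h1 : σ i = (xx (i + 2)).1 i := hkey (i + 2) i
      (lt_of_lt_of_le (by omega) (hnge (i + 2)))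
    have h2 : σ (i + 1) = (xx (i + 2)).1 (i + 1) := hkey (i + 2) (i + 1)
      (lt_of_lt_of_le (by omega) (hnge (i + 2)))
    rw [h1, h2]
    exact (xx (i + 2)).2 (Nat.lt_succ_self i)
  have hσblock : ∀ k, g₀ (nn k) ≤ σ (nn k) := by
    intro k
    have : σ (nn k) = (xx (k + 1)).1 (nn k) := hkey (k + 1) (nn k) (hspec k).1
    rw [this, (hspec k).2.2.1]
    omega
  have havoid : ∀ k, ∀ m ≤ k, ∀ y : MSp,
      (∀ i, nn k ≤ i → i < nn (k + 1) → y.1 i = σ i) → y ∉ T m := by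
    intro k m hm y hy
    refine (hspec k).2.2.2 m hm y ?_
    intro i hi1 hi2
    rw [hy i hi1 hi2, hkey (k + 1) i hi2]
  refine ⟨nn, hnmono, ?_⟩
  intro A hA
  by_contra hinf
  rw [← Set.not_infinite, not_not] at hinf
  set K : Set ℕ := {k | A ∩ Set.Ico (nn k) (nn (k + 1)) = ∅} with hK
  -- define the diagonal function h
  set h : ℕ → ℕ := fun i =>
    if ∃ k ∈ K, nn k ≤ i ∧ i < nn (k + 1) then σ i else max (g₀ i) (σ i) with hh
  have hhge : ∀ i, σ i ≤ h i := by
    intro i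
    rw [hh]
    by_cases hc : ∃ k ∈ K, nn k ≤ i ∧ i < nn (k + 1)
    · simp only [if_pos hc]; exact le_rfl
    · simp only [if_neg hc]
      exact le_max_right _ _
  have hhmono : StrictMono h := by
    apply strictMono_nat_of_lt_succ
    intro i
    have hs : σ i < σ (i + 1) := hσmono (Nat.lt_succ_self i)
    by_cases hc : ∃ k ∈ K, nn k ≤ i ∧ i < nn (k + 1)
    · -- h i = σ i
      rw [hh]
      simp only [if_pos hc]
      exact lt_of_lt_of_le hs (hhge (i + 1))
    · rw [hh]
      simp only [if_neg hc]
      by_cases hc2 : ∃ k ∈ K, nn k ≤ i + 1 ∧ i + 1 < nn (k + 1)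
      · simp only [if_pos hc2]
        obtain ⟨k, hkK, hk1, hk2⟩ := hc2
        have hik : i + 1 = nn k := by
          by_contra hne
          exact hc ⟨k, hkK, by omega, by omega⟩
        have hg : g₀ i < g₀ (i + 1) := hg₀ (Nat.lt_succ_self i)
        have : g₀ (i + 1) ≤ σ (i + 1) := by rw [hik]; exact hσblock k
        simp only [max_lt_iff]
        exact ⟨by omega, hs⟩
      · simp only [if_neg hc2]
        exact max_lt_max (hg₀ (Nat.lt_succ_self i)) hs
  -- h is in M₀
  have hhM : LeSF F g₀ h := by
    refine upward hF.1 hA ?_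
    intro i hiA
    show g₀ i ≤ h i
    have : ¬ ∃ k ∈ K, nn k ≤ i ∧ i < nn (k + 1) := by
      rintro ⟨k, hkK, hk1, hk2⟩
      have : i ∈ A ∩ Set.Ico (nn k) (nn (k + 1)) := ⟨hiA, hk1, hk2⟩
      rw [hK] at hkK
      simp only [Set.mem_setOf_eq] at hkK
      rw [hkK] at this
      exact this
    rw [hh]
    simp only [if_neg this]
    exact le_max_left _ _
  have hmem : (⟨h, hhmono⟩ : MSp) ∈ ⋃ m, T m := hcov hhM
  obtain ⟨m, hm⟩ := Set.mem_iUnion.1 hmem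
  obtain ⟨k, hkK, hkm⟩ := hinf.exists_gt m
  refine havoid k m (le_of_lt hkm) ⟨h, hhmono⟩ ?_ hm
  intro i hi1 hi2
  show h i = σ i
  rw [hh]
  simp only [if_pos (⟨k, hkK, hi1, hi2⟩ : ∃ k ∈ K, nn k ≤ i ∧ i < nn (k + 1))]

lemma talagrand (F : Set (Set ℕ)) (n : ℕ → ℕ) (hn : StrictMono n)
    (h : ∀ A ∈ F, {k | A ∩ Set.Ico (n k) (n (k + 1)) = ∅}.Finite) :
    IsMeagre {x : ℕ → Bool | {i | x i = true} ∈ F} := by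
  classical
  set C : ℕ → Set (ℕ → Bool) := fun m =>
    {x | ∀ k, m ≤ k → ∃ i, n k ≤ i ∧ i < n (k + 1) ∧ x i = true} with hC
  have hcov : {x : ℕ → Bool | {i | x i = true} ∈ F} ⊆ ⋃ m, C m := by
    intro x hx
    have hfin := h _ hx
    obtain ⟨m, hm⟩ := hfin.bddAbove
    refine Set.mem_iUnion.2 ⟨m + 1, ?_⟩
    intro k hk
    have hknot : k ∉ {k | {i | x i = true} ∩ Set.Ico (n k) (n (k + 1)) = ∅} := by
      intro hkin
      have := hm hkin
      omega
    simp only [Set.mem_setOf_eq] at hknot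
    obtain ⟨i, hi⟩ := Set.nonempty_iff_ne_empty.2 hknot
    exact ⟨i, hi.2.1, hi.2.2, hi.1⟩
  have hclosed : ∀ m, IsClosed (C m) := by
    intro m
    have : C m = ⋂ (k : ℕ) (_ : m ≤ k), ⋃ i ∈ Set.Ico (n k) (n (k + 1)),
        {x : ℕ → Bool | x i = true} := by
      ext x
      simp only [hC, Set.mem_setOf_eq, Set.mem_iInter, Set.mem_iUnion, Set.mem_Ico]
      constructor
      · intro hx k hk
        obtain ⟨i, h1, h2, h3⟩ := hx k hk
        exact ⟨i, ⟨h1, h2⟩, h3⟩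
      · intro hx k hk
        obtain ⟨i, ⟨h1, h2⟩, h3⟩ := hx k hk
        exact ⟨i, h1, h2, h3⟩
    rw [this]
    refine isClosed_iInter fun k => isClosed_iInter fun _ => ?_
    refine (Set.finite_Ico _ _).isClosed_biUnion fun i _ => ?_
    have : {x : ℕ → Bool | x i = true} = (fun x : ℕ → Bool => x i) ⁻¹' {true} := rfl
    rw [this]
    exact IsClosed.preimage (continuous_apply i) (isClosed_discrete ({true} : Set Bool))
  have hnd : ∀ m, IsNowhereDense (C m) := by
    intro m
    rw [(hclosed m).isNowhereDense_iff]
    rw [Set.eq_empty_iff_forall_notMem]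
    intro x hx
    obtain ⟨v, ⟨c, N, rfl⟩, hxv, hvC⟩ :=
      (PiNat.isTopologicalBasis_cylinders (fun _ : ℕ => Bool)).exists_subset_of_mem_open hx
        isOpen_interior
    set y : ℕ → Bool := fun i => if i < N then x i else false with hy
    have hyC : y ∈ C m := by
      apply interior_subset
      apply hvC
      intro i hi
      rw [hy]
      simp only [if_pos hi]
      exact hxv i hi
    set k : ℕ := max m N with hk
    obtain ⟨i, hi1, _, hi3⟩ := hyC k (le_max_left _ _)
    have hiN : N ≤ i := le_trans (le_trans (le_max_right m N) (hn.le_apply)) hi1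
    rw [hy] at hi3
    simp only [if_neg (by omega : ¬ i < N)] at hi3
    exact Bool.false_ne_true hi3
  rw [isMeagre_iff_countable_union_isNowhereDense]
  refine ⟨Set.range C, ?_, Set.countable_range C, ?_⟩
  · rintro t ⟨m, rfl⟩
    exact hnd m
  · refine hcov.trans ?_
    rw [Set.sUnion_range]

/-- a nonmeager filter is nonmeager-bounding: for every
`Y ⊆ ℕ^ℕ` of size `< b(F)`, the set of increasing `≤_F`-bounds of `Y` is
nonmeager. -/
theorem stmt_14 (F : Set (Set ℕ)) (hF : FilterOn F) (hnm : NonmeagerSF F)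
    (Y : Set (ℕ → ℕ)) (hY : #Y < bSF F) :
    ¬ IsMeagre {g : {g : ℕ → ℕ // StrictMono g} |
        ∀ f ∈ Y, LeSF F f g.val} := by
  intro hMeag
  have hbd : BoundedSF F Y := by
    by_contra hnb
    have hmem : #Y ∈ {c : Cardinal | ∃ Y' : Set (ℕ → ℕ), #Y' = c ∧ ¬ BoundedSF F Y'} :=
      ⟨Y, rfl, hnb⟩
    exact absurd (csInf_le' hmem) (not_le.2 hY)
  obtain ⟨g, hg⟩ := hbd
  set g₀ : ℕ → ℕ := fun i => i + ∑ j ∈ Finset.range (i + 1), g j with hg₀def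
  have hg₀mono : StrictMono g₀ := by
    apply strictMono_nat_of_lt_succ
    intro i
    have : ∑ j ∈ Finset.range (i + 1), g j ≤ ∑ j ∈ Finset.range (i + 1 + 1), g j :=
      Finset.sum_le_sum_of_subset (Finset.range_subset_range.2 (by omega))
    simp only [hg₀def]
    omega
  have hgle : ∀ i, g i ≤ g₀ i := by
    intro i
    have := Finset.single_le_sum (f := g) (fun j _ => Nat.zero_le _)
      (Finset.self_mem_range_succ i)
    simp only [hg₀def]
    omega
  have hsub : {h : MSp | LeSF F g₀ h.1} ⊆
      {h : MSp | ∀ f ∈ Y, LeSF F f h.1} := by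
    intro h hh f hf
    have h1 : LeSF F f g₀ := upward hF.1 (hg f hf)
      (fun i hi => show f i ≤ g₀ i from le_trans (show f i ≤ g i from hi) (hgle i))
    have h2 := hF.2 _ h1 _ hh
    exact upward hF.1 h2
      (fun i hi => show f i ≤ h.1 i from le_trans hi.1 hi.2)
  have hM : IsMeagre {h : MSp | LeSF F g₀ h.1} := hMeag.mono hsub
  obtain ⟨nn, hnmono, hall⟩ := coreE F hF g₀ hg₀mono hM
  exact hnm (talagrand F nn hnmono hall)
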